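/- In the complete graph K_{6} on vertex set {1,...,6} with the 3-edge-coloring where color 1 = {65, 51, 12, 24, 45}, color 2 = {23, 14, 46, 35, 16} and color 3 consists of the remaining 5 edges, every color class has exactly 5 edges, but no perfect matching of K_6 contains exactly one edge of each color. -/
import Mathlib


/-- Color class 1 (bold edges) of the coloring of `K_6`; vertices `1,…,6`
are represented by `0,…,5 : Fin 6`. -/
def color1 : Finset (Sym2 (Fin 6)) := {s(4, 5), s(0, 4), s(0, 1), s(1, 3), s(3, 4)}

/-- Color class 2 (dashed edges). -/
def color2 : Finset (Sym2 (Fin 6)) := {s(1, 2), s(0, 3), s(3, 5), s(2, 4), s(0, 5)}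

/-- Color class 3 (the remaining edges). -/
def color3 : Finset (Sym2 (Fin 6)) := {s(0, 2), s(1, 4), s(1, 5), s(2, 3), s(2, 5)}

theorem aux_no_rainbow : ∀ a b c d e f : Fin 6,
    s(a, b) ∈ color1 → s(c, d) ∈ color2 → s(e, f) ∈ color3 →
    ({a, b, c, d, e, f} : Finset (Fin 6)) ≠ Finset.univ := by decide

theorem stmt_10 :
    color1.card = 5 ∧ color2.card = 5 ∧ color3.card = 5 ∧
    Disjoint color1 color2 ∧ Disjoint color1 color3 ∧ Disjoint color2 color3 ∧
    color1 ∪ color2 ∪ color3 = (⊤ : SimpleGraph (Fin 6)).edgeFinset ∧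
    ¬ ∃ a b c d e f : Fin 6, ({a, b, c, d, e, f} : Finset (Fin 6)) = Finset.univ ∧
      s(a, b) ∈ color1 ∧ s(c, d) ∈ color2 ∧ s(e, f) ∈ color3 := by
  refine ⟨by decide, by decide, by decide, by decide, by decide, by decide, by decide, ?_⟩
  rintro ⟨a, b, c, d, e, f, hu, h1, h2, h3⟩
  exact aux_no_rainbow a b c d e f h1 h2 h3 hu
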